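/- Let X ∈ S^n and let f : ℝ^n → ℝ be a symmetric function (f(Px)ated = f(x) for every n×n permutation matrix P and every x in its domain) that is differentiable at λ(X). Then f∘λ is (Fréchet) differentiable at X, and for every orthogonal matrix V with X = V · Diag λ(X) · Vᵀ and every H ∈ S^n, the derivative satisfies ∇(f∘λ)(X)[H] = tr( ( V · Diag(∇f(λ(X))) · Vᵀ ) · H ); i.e. ∇(f∘λ)(X) = V (Diag ∇f(λ(X))) Vᵀ. -/

import Mathlib

open Matrix

noncomputable section

attribute [local instance] Matrix.normedAddCommGroup Matrix.normedSpace

/-- The space of `n × n` real matrices. -/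
abbrev Mat (n : ℕ) := Matrix (Fin n) (Fin n) ℝ

/-- The subspace `S^n` of symmetric matrices inside `M^n`. -/
def symSub (n : ℕ) : Submodule ℝ (Mat n) where
  carrier := {A | A.IsSymm}
  add_mem' := fun ha hb => ha.add hb
  zero_mem' := Matrix.isSymm_zero
  smul_mem' := fun c _ hA => hA.smul c

/-- `eig` assigns to every symmetric matrix its vector of eigenvalues ordered
nonincreasingly, as witnessed by an orthogonal diagonalization. -/
def IsEigsOf {n : ℕ} (eig : Mat n → (Fin n → ℝ)) : Prop :=
  ∀ A : Mat n, A.IsSymm →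
    (∀ i j : Fin n, i ≤ j → eig A j ≤ eig A i) ∧
    ∃ V : Mat n, Vᵀ * V = 1 ∧ V * Vᵀ = 1 ∧ A = V * Matrix.diagonal (eig A) * Vᵀ


/-! ### Auxiliary lemmas for Lewis' theorem on derivatives of spectral functions -/

section SpectralAux

open Finset

lemma card_ind {n k : ℕ} (hk : k ≤ n) :
    (Finset.univ.filter (fun i : Fin n => (i:ℕ) < k)).card = k := by
  have h1 : (Finset.univ.filter (fun i : Fin n => (i:ℕ) < k)).card
      = ((Finset.range n).filter (fun i => i < k)).card := by
    refine Finset.card_nbij (fun i => (i : ℕ)) ?_ ?_ ?_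
    · intro a ha; simp at ha ⊢; omega
    · intro a ha b hb hab; exact Fin.ext hab
    · intro a ha; simp at ha; exact ⟨⟨a, ha.1⟩, by simp [ha.2], by simp⟩
  have h2 : (Finset.range n).filter (fun i => i < k) = Finset.range k := by
    ext x; simp [Finset.mem_range]; omega
  rw [h1, h2, Finset.card_range]

lemma sum_ind {n k : ℕ} (hk : k ≤ n) :
    (∑ i : Fin n, if (i : ℕ) < k then (1:ℝ) else 0) = k := by
  rw [Finset.sum_boole, card_ind hk]

lemma core_ineq {n k : ℕ} (hk : k ≤ n) (ν a : Fin n → ℝ) (c δ : ℝ)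
    (hν1 : ∀ i : Fin n, (i:ℕ) < k → c + δ ≤ ν i) (hν2 : ∀ i : Fin n, k ≤ (i:ℕ) → ν i ≤ c)
    (ha0 : ∀ i, 0 ≤ a i) (ha1 : ∀ i, a i ≤ 1) (hsum : ∑ i, a i = k) :
    ∑ i, a i * ν i ≤ (∑ i : Fin n, if (i:ℕ) < k then ν i else 0)
      - δ * (k - ∑ i : Fin n, (if (i:ℕ) < k then a i else 0)) := by
  have key : ∑ i : Fin n, (a i * ν i - (if (i:ℕ) < k then ν i else 0)
      + δ * ((if (i:ℕ) < k then (1:ℝ) else 0) - (if (i:ℕ) < k then a i else 0)))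
      ≤ ∑ i : Fin n, c * (a i - (if (i:ℕ) < k then (1:ℝ) else 0)) := by
    apply Finset.sum_le_sum
    intro i _
    by_cases h : (i:ℕ) < k
    · simp only [if_pos h]
      have := hν1 i h; have := ha1 i; have := ha0 i
      nlinarith
    · simp only [if_neg h]
      have := hν2 i (not_lt.mp h); have := ha0 i
      nlinarith
  have e1 : ∑ i : Fin n, (a i * ν i - (if (i:ℕ) < k then ν i else 0)
      + δ * ((if (i:ℕ) < k then (1:ℝ) else 0) - (if (i:ℕ) < k then a i else 0)))
      = (∑ i : Fin n, a i * ν i) - (∑ i : Fin n, if (i:ℕ) < k then ν i else 0)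
        + δ * ((∑ i : Fin n, if (i:ℕ) < k then (1:ℝ) else 0)
          - (∑ i : Fin n, if (i:ℕ) < k then a i else 0)) := by
    rw [Finset.sum_add_distrib, Finset.sum_sub_distrib, ← Finset.mul_sum, Finset.sum_sub_distrib]
  have e2 : ∑ i : Fin n, c * (a i - (if (i:ℕ) < k then (1:ℝ) else 0))
      = c * ((∑ i : Fin n, a i) - (∑ i : Fin n, if (i:ℕ) < k then (1:ℝ) else 0)) := by
    rw [← Finset.mul_sum, Finset.sum_sub_distrib]
  rw [e1, e2, sum_ind hk, hsum] at key
  simp at key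
  linarith

lemma trace_mul_diag {n : ℕ} (M : Mat n) (d : Fin n → ℝ) :
    (M * Matrix.diagonal d).trace = ∑ i, M i i * d i := by
  simp [Matrix.trace, Matrix.diag, Matrix.mul_diagonal]

lemma proj_diag_nonneg {n : ℕ} (Q : Mat n) (hQs : Q.IsSymm) (hQi : Q * Q = Q) (i : Fin n) :
    0 ≤ Q i i ∧ Q i i ≤ 1 := by
  have hsq : Q i i = ∑ j, (Q i j)^2 := by
    conv_lhs => rw [← hQi]
    rw [Matrix.mul_apply]
    congr 1; funext j
    rw [sq]
    congr 1
    exact Matrix.IsSymm.apply hQs i j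
  constructor
  · rw [hsq]; exact Finset.sum_nonneg fun j _ => sq_nonneg _
  · have h1 : (Q i i)^2 ≤ Q i i := by
      conv_rhs => rw [hsq]
      exact Finset.single_le_sum (fun j _ => sq_nonneg (Q i j)) (Finset.mem_univ i)
    nlinarith

/-- indicator diagonal matrix -/
def Ek (n k : ℕ) : Mat n := Matrix.diagonal (fun i => if (i:ℕ) < k then (1:ℝ) else 0)

lemma Ek_mul_Ek {n k : ℕ} : Ek n k * Ek n k = Ek n k := by
  rw [Ek, Matrix.diagonal_mul_diagonal]
  ext i j
  by_cases hij : i = j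
  · subst hij
    by_cases h : (i:ℕ) < k <;> simp [Matrix.diagonal_apply_eq, h]
  · simp [Matrix.diagonal_apply_ne _ hij]

lemma Ek_symm {n k : ℕ} : (Ek n k).IsSymm := Matrix.isSymm_diagonal _

lemma Ek_trace {n k : ℕ} (hk : k ≤ n) : (Ek n k).trace = (k:ℝ) := by
  rw [Ek, Matrix.trace_diagonal]; exact sum_ind hk

lemma trace_proj_bound {n k : ℕ} (hk : k ≤ n) (Y U : Mat n) (ν : Fin n → ℝ)
    (hU1 : Uᵀ * U = 1) (hY : Y = U * Matrix.diagonal ν * Uᵀ)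
    (Q : Mat n) (hQs : Q.IsSymm) (hQi : Q * Q = Q) (hQt : Q.trace = (k:ℝ))
    (c δ : ℝ)
    (hν1 : ∀ i : Fin n, (i:ℕ) < k → c + δ ≤ ν i) (hν2 : ∀ i : Fin n, k ≤ (i:ℕ) → ν i ≤ c) :
    (Q * Y).trace ≤ (∑ i : Fin n, if (i:ℕ) < k then ν i else 0)
      - δ * (k - (Q * (U * Ek n k * Uᵀ)).trace) := by
  set Q' : Mat n := Uᵀ * Q * U with hQ'
  set a : Fin n → ℝ := fun i => Q' i i with ha
  have hQ's : Q'.IsSymm := by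
    rw [Matrix.IsSymm, hQ', Matrix.transpose_mul, Matrix.transpose_mul,
      Matrix.transpose_transpose, hQs.eq, Matrix.mul_assoc]
  have hQ'i : Q' * Q' = Q' := by
    rw [hQ']
    calc Uᵀ * Q * U * (Uᵀ * Q * U) = Uᵀ * Q * (U * Uᵀ) * Q * U := by
          simp only [Matrix.mul_assoc]
      _ = Uᵀ * Q * Q * U := by
          rw [mul_eq_one_comm.mp hU1]
          simp only [Matrix.mul_assoc, Matrix.one_mul]
      _ = Uᵀ * Q * U := by rw [Matrix.mul_assoc Uᵀ Q Q, hQi]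
  have htr1 : (Q * Y).trace = ∑ i, a i * ν i := by
    rw [hY]
    have : Q * (U * Matrix.diagonal ν * Uᵀ) = (Q * U * Matrix.diagonal ν) * Uᵀ := by
      simp only [Matrix.mul_assoc]
    rw [this, Matrix.trace_mul_comm, ← Matrix.mul_assoc, ← Matrix.mul_assoc, trace_mul_diag]
  have htr2 : ∑ i, a i = (k:ℝ) := by
    have : Q'.trace = Q.trace := by
      rw [hQ', Matrix.trace_mul_comm, ← Matrix.mul_assoc, mul_eq_one_comm.mp hU1,
        Matrix.one_mul]
    rw [← hQt, ← this]; rfl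
  have htr3 : (Q * (U * Ek n k * Uᵀ)).trace = ∑ i : Fin n, (if (i:ℕ) < k then a i else 0) := by
    have : Q * (U * Ek n k * Uᵀ) = (Q * U * Ek n k) * Uᵀ := by simp only [Matrix.mul_assoc]
    rw [this, Matrix.trace_mul_comm, ← Matrix.mul_assoc, ← Matrix.mul_assoc]
    rw [Ek, trace_mul_diag]
    congr 1; funext i
    by_cases h : (i:ℕ) < k <;> simp [h, ha, hQ']
  rw [htr1, htr3]
  exact core_ineq hk ν a c δ hν1 hν2 (fun i => (proj_diag_nonneg Q' hQ's hQ'i i).1)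
    (fun i => (proj_diag_nonneg Q' hQ's hQ'i i).2) htr2

lemma conj_symm {n : ℕ} (V E : Mat n) (hE : E.IsSymm) : (V * E * Vᵀ).IsSymm := by
  rw [Matrix.IsSymm, Matrix.transpose_mul, Matrix.transpose_mul, Matrix.transpose_transpose,
    hE.eq, Matrix.mul_assoc]

lemma conj_idem {n : ℕ} (V E : Mat n) (hV : Vᵀ * V = 1) (hE : E * E = E) :
    (V * E * Vᵀ) * (V * E * Vᵀ) = V * E * Vᵀ := by
  calc (V * E * Vᵀ) * (V * E * Vᵀ) = V * E * (Vᵀ * V) * E * Vᵀ := by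
        simp only [Matrix.mul_assoc]
    _ = V * (E * E) * Vᵀ := by rw [hV]; simp only [Matrix.mul_assoc, Matrix.one_mul]
    _ = V * E * Vᵀ := by rw [hE, Matrix.mul_assoc]

lemma conj_trace {n : ℕ} (V E : Mat n) (hV : Vᵀ * V = 1) : (V * E * Vᵀ).trace = E.trace := by
  rw [Matrix.trace_mul_comm]
  have : Vᵀ * (V * E) = (Vᵀ * V) * E := by rw [Matrix.mul_assoc]
  rw [this, hV, Matrix.one_mul]

lemma trace_projk_self {n k : ℕ} (U Y : Mat n) (ν : Fin n → ℝ) (hU1 : Uᵀ * U = 1)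
    (hY : Y = U * Matrix.diagonal ν * Uᵀ) :
    ((U * Ek n k * Uᵀ) * Y).trace = ∑ i : Fin n, if (i:ℕ) < k then ν i else 0 := by
  have : (U * Ek n k * Uᵀ) * Y = U * (Ek n k * Matrix.diagonal ν) * Uᵀ := by
    rw [hY]
    calc U * Ek n k * Uᵀ * (U * Matrix.diagonal ν * Uᵀ)
        = U * Ek n k * (Uᵀ * U) * Matrix.diagonal ν * Uᵀ := by simp only [Matrix.mul_assoc]
      _ = U * (Ek n k * Matrix.diagonal ν) * Uᵀ := by
          rw [hU1]; simp only [Matrix.mul_assoc, Matrix.one_mul]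
  rw [this, conj_trace _ _ hU1, Ek, Matrix.diagonal_mul_diagonal, Matrix.trace_diagonal]
  congr 1; funext i; by_cases h : (i:ℕ) < k <;> simp [h]

lemma fan_plain {n k : ℕ} (hk : k ≤ n) (Y U : Mat n) (ν : Fin n → ℝ)
    (hU1 : Uᵀ * U = 1) (hY : Y = U * Matrix.diagonal ν * Uᵀ)
    (hmono : ∀ i j : Fin n, i ≤ j → ν j ≤ ν i)
    (Q : Mat n) (hQs : Q.IsSymm) (hQi : Q * Q = Q) (hQt : Q.trace = (k:ℝ)) :
    (Q * Y).trace ≤ ∑ i : Fin n, if (i:ℕ) < k then ν i else 0 := by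
  rcases Nat.lt_or_ge k n with hkn | hkn
  · have h := trace_proj_bound hk Y U ν hU1 hY Q hQs hQi hQt (ν ⟨k, hkn⟩) 0
      (fun i hi => by
        rw [add_zero]
        exact hmono i ⟨k, hkn⟩ (by rw [Fin.le_def]; exact le_of_lt hi))
      (fun i hi => hmono ⟨k, hkn⟩ i (by rw [Fin.le_def]; exact hi))
    simpa using h
  · have hkn' : n = k := le_antisymm hkn hk
    subst hkn'
    rcases Nat.eq_zero_or_pos n with h0 | h0
    · subst h0
      simp [Matrix.trace]
    · have h := trace_proj_bound (le_refl n) Y U ν hU1 hY Q hQs hQi hQt (ν ⟨n-1, by omega⟩) 0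
        (fun i _ => by
          rw [add_zero]
          exact hmono i ⟨n-1, by omega⟩ (by rw [Fin.le_def]; simp; omega))
        (fun i hi => absurd i.2 (by omega))
      simpa using h

lemma frob_eq {n : ℕ} (M : Mat n) : (M * Mᵀ).trace = ∑ i, ∑ j, (M i j)^2 := by
  simp [Matrix.trace, Matrix.diag, Matrix.mul_apply, Matrix.transpose_apply, sq]

lemma frob_nonneg {n : ℕ} (M : Mat n) : 0 ≤ (M * Mᵀ).trace := by
  rw [frob_eq]
  exact Finset.sum_nonneg fun i _ => Finset.sum_nonneg fun j _ => sq_nonneg _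

lemma trace_sq_le {n : ℕ} (M N : Mat n) :
    ((M * N).trace)^2 ≤ (M * Mᵀ).trace * (N * Nᵀ).trace := by
  have h1 : (M * N).trace = ∑ p : Fin n × Fin n, M p.1 p.2 * N p.2 p.1 := by
    rw [Fintype.sum_prod_type]
    simp [Matrix.trace, Matrix.diag, Matrix.mul_apply]
  have h2 : (M * Mᵀ).trace = ∑ p : Fin n × Fin n, (M p.1 p.2)^2 := by
    rw [Fintype.sum_prod_type, frob_eq]
  have h3 : (N * Nᵀ).trace = ∑ p : Fin n × Fin n, (N p.2 p.1)^2 := by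
    rw [Fintype.sum_prod_type, frob_eq, Finset.sum_comm]
  rw [h1, h2, h3]
  exact Finset.sum_mul_sq_le_sq_mul_sq Finset.univ _ _

lemma gap_arith (δ m r F : ℝ) (hδ : 0 < δ) (hm0 : 0 ≤ m) (hF0 : 0 ≤ F)
    (hr2 : r^2 ≤ 2*m*F) : -δ*m + r ≤ F/(2*δ) := by
  have h2δ : 0 < 2 * δ := by linarith
  rw [le_div_iff₀ h2δ]
  by_contra hcon
  push_neg at hcon
  have hB : 0 ≤ F + 2*δ^2*m := by positivity
  have h1 : F + 2*δ^2*m < 2*δ*r := by nlinarith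
  have h2 : (F + 2*δ^2*m)^2 < (2*δ*r)^2 := by nlinarith
  have h3 : (2*δ*r)^2 ≤ 8*δ^2*m*F := by
    nlinarith [mul_le_mul_of_nonneg_left hr2 (by positivity : (0:ℝ) ≤ 4*δ^2)]
  nlinarith [sq_nonneg (F - 2*δ^2*m)]
section
variable {n : ℕ}

/-- P_j is an orthogonal projection of trace j -/
lemma projV_symm (V : Mat n) (j : ℕ) : (V * Ek n j * Vᵀ).IsSymm :=
  conj_symm V _ Ek_symm
lemma projV_idem (V : Mat n) (hV : Vᵀ * V = 1) (j : ℕ) :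
    (V * Ek n j * Vᵀ) * (V * Ek n j * Vᵀ) = V * Ek n j * Vᵀ :=
  conj_idem V _ hV Ek_mul_Ek
lemma projV_trace (V : Mat n) (hV : Vᵀ * V = 1) {j : ℕ} (hj : j ≤ n) :
    (V * Ek n j * Vᵀ).trace = (j:ℝ) := by rw [conj_trace V _ hV, Ek_trace hj]

/-- lower bound : Δ ≥ 0 -/
lemma delta_lower {j : ℕ} (hj : j ≤ n) (X V₀ : Mat n) (μ : Fin n → ℝ)
    (hV₀1 : V₀ᵀ * V₀ = 1) (hXd : X = V₀ * Matrix.diagonal μ * V₀ᵀ)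
    (Z U : Mat n) (ν : Fin n → ℝ) (hU1 : Uᵀ * U = 1)
    (hZd : Z = U * Matrix.diagonal ν * Uᵀ)
    (hνmono : ∀ i i' : Fin n, i ≤ i' → ν i' ≤ ν i) :
    0 ≤ (∑ i : Fin n, if (i:ℕ) < j then ν i else 0)
        - (∑ i : Fin n, if (i:ℕ) < j then μ i else 0)
        - ((V₀ * Ek n j * V₀ᵀ) * (Z - X)).trace := by
  have hPX : ((V₀ * Ek n j * V₀ᵀ) * X).trace = ∑ i : Fin n, if (i:ℕ) < j then μ i else 0 :=
    trace_projk_self V₀ X μ hV₀1 hXd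
  have hPZ : ((V₀ * Ek n j * V₀ᵀ) * Z).trace ≤ ∑ i : Fin n, if (i:ℕ) < j then ν i else 0 :=
    fan_plain hj Z U ν hU1 hZd hνmono _ (projV_symm V₀ j) (projV_idem V₀ hV₀1 j)
      (projV_trace V₀ hV₀1 hj)
  have : (V₀ * Ek n j * V₀ᵀ) * (Z - X) = (V₀ * Ek n j * V₀ᵀ) * Z - (V₀ * Ek n j * V₀ᵀ) * X :=
    Matrix.mul_sub _ _ _
  rw [this, Matrix.trace_sub, hPX]
  linarith

/-- top : Δ_n = 0 -/
lemma delta_top (X V₀ : Mat n) (μ : Fin n → ℝ)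
    (hV₀2 : V₀ * V₀ᵀ = 1) (hXd : X = V₀ * Matrix.diagonal μ * V₀ᵀ) (hV₀1 : V₀ᵀ * V₀ = 1)
    (Z U : Mat n) (ν : Fin n → ℝ) (hU1 : Uᵀ * U = 1) (hU2 : U * Uᵀ = 1)
    (hZd : Z = U * Matrix.diagonal ν * Uᵀ) :
    (∑ i : Fin n, if (i:ℕ) < n then ν i else 0)
        - (∑ i : Fin n, if (i:ℕ) < n then μ i else 0)
        - ((V₀ * Ek n n * V₀ᵀ) * (Z - X)).trace = 0 := by
  have hE : Ek n n = 1 := by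
    rw [Ek]
    have : (fun i : Fin n => if (i:ℕ) < n then (1:ℝ) else 0) = fun _ => 1 := by
      funext i; simp [i.2]
    rw [this, Matrix.diagonal_one]
  have hP : V₀ * Ek n n * V₀ᵀ = 1 := by rw [hE, Matrix.mul_one, hV₀2]
  have htr : ∀ (W B : Mat n) (ω : Fin n → ℝ), Wᵀ * W = 1 → B = W * Matrix.diagonal ω * Wᵀ →
      B.trace = ∑ i : Fin n, if (i:ℕ) < n then ω i else 0 := by
    intro W B ω hW hB
    rw [hB, conj_trace W _ hW, Matrix.trace_diagonal]
    apply Finset.sum_congr rfl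
    intro i _; simp [i.2]
  rw [hP, Matrix.one_mul, Matrix.trace_sub,
    ← htr V₀ X μ hV₀1 hXd, ← htr U Z ν hU1 hZd]
  ring

/-- upper bound with gap -/
lemma delta_upper {k : ℕ} (hk : k + 1 < n) (X V₀ : Mat n) (μ : Fin n → ℝ)
    (hV₀1 : V₀ᵀ * V₀ = 1) (hXd : X = V₀ * Matrix.diagonal μ * V₀ᵀ)
    (hμmono : ∀ i i' : Fin n, i ≤ i' → μ i' ≤ μ i)
    (Z U : Mat n) (ν : Fin n → ℝ) (hU1 : Uᵀ * U = 1) (hU2 : U * Uᵀ = 1)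
    (hZd : Z = U * Matrix.diagonal ν * Uᵀ)
    {δ : ℝ} (hδ : 0 < δ) (hgap : δ = μ ⟨k, by omega⟩ - μ ⟨k+1, hk⟩) :
    (∑ i : Fin n, if (i:ℕ) < k+1 then ν i else 0)
        - (∑ i : Fin n, if (i:ℕ) < k+1 then μ i else 0)
        - ((V₀ * Ek n (k+1) * V₀ᵀ) * (Z - X)).trace
      ≤ ((Z - X) * (Z - X)ᵀ).trace / (2 * δ) := by
  set j := k + 1 with hjdef
  have hj : j ≤ n := by omega
  set P : Mat n := V₀ * Ek n j * V₀ᵀ with hPdef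
  set Q : Mat n := U * Ek n j * Uᵀ with hQdef
  set H : Mat n := Z - X with hHdef
  set F : ℝ := (H * Hᵀ).trace with hFdef
  have hF0 : 0 ≤ F := frob_nonneg H
  -- s_j Z = tr(Q Z)
  have hQZ : (Q * Z).trace = ∑ i : Fin n, if (i:ℕ) < j then ν i else 0 :=
    trace_projk_self U Z ν hU1 hZd
  -- tr(P X) = s_j X
  have hPX : (P * X).trace = ∑ i : Fin n, if (i:ℕ) < j then μ i else 0 :=
    trace_projk_self V₀ X μ hV₀1 hXd
  -- gap bound at X : tr(QX) ≤ s_j X - δ (j - tr(QP))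
  have hQX : (Q * X).trace ≤ (∑ i : Fin n, if (i:ℕ) < j then μ i else 0)
      - δ * (j - (Q * P).trace) := by
    apply trace_proj_bound hj X V₀ μ hV₀1 hXd Q (projV_symm U j) (projV_idem U hU1 j)
      (projV_trace U hU1 hj) (μ ⟨k+1, hk⟩) δ
    · intro i hi
      rw [hgap]
      have : μ ⟨k, by omega⟩ ≤ μ i := hμmono i ⟨k, by omega⟩ (by rw [Fin.le_def]; simp; omega)
      linarith
    · intro i hi
      exact hμmono ⟨k+1, hk⟩ i (by rw [Fin.le_def]; exact hi)
  -- m := j - tr(QP) ≥ 0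
  set m : ℝ := (j:ℝ) - (Q * P).trace with hmdef
  have hm0 : 0 ≤ m := by
    have : (Q * P).trace ≤ ∑ i : Fin n, if (i:ℕ) < j then (if (i:ℕ) < j then (1:ℝ) else 0) else 0 := by
      apply fan_plain hj P V₀ (fun i => if (i:ℕ) < j then (1:ℝ) else 0) hV₀1
      · rw [hPdef, Ek]
      · intro i i' hii'
        by_cases h1 : (i':ℕ) < j
        · have h2 : (i:ℕ) < j := by rw [Fin.le_def] at hii'; omega
          simp [h1, h2]
        · by_cases h2 : (i:ℕ) < j <;> simp [h1, h2]
      · exact projV_symm U j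
      · exact projV_idem U hU1 j
      · exact projV_trace U hU1 hj
    have he : (∑ i : Fin n, if (i:ℕ) < j then (if (i:ℕ) < j then (1:ℝ) else 0) else 0)
        = (j:ℝ) := by
      rw [← sum_ind hj]
      apply Finset.sum_congr rfl
      intro i _; by_cases h : (i:ℕ) < j <;> simp [h]
    rw [hmdef]; rw [he] at this; linarith
  -- r := tr((Q-P)H), r² ≤ 2 m F
  set r : ℝ := ((Q - P) * H).trace with hrdef
  have hQPs : (Q - P)ᵀ = Q - P := by
    rw [Matrix.transpose_sub, (projV_symm U j).eq, (projV_symm V₀ j).eq]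
  have hr2 : r^2 ≤ (2 * m) * F := by
    have h1 : r^2 ≤ ((Q - P) * (Q - P)ᵀ).trace * F := trace_sq_le (Q - P) H
    have h2 : ((Q - P) * (Q - P)ᵀ).trace = 2 * m := by
      rw [hQPs]
      have : (Q - P) * (Q - P) = Q * Q - Q * P - P * Q + P * P := by
        rw [Matrix.sub_mul, Matrix.mul_sub, Matrix.mul_sub]
        abel
      rw [this, Matrix.trace_add, Matrix.trace_sub, Matrix.trace_sub,
        projV_idem U hU1 j, projV_idem V₀ hV₀1 j, projV_trace U hU1 hj,
        projV_trace V₀ hV₀1 hj, Matrix.trace_mul_comm P Q, hmdef]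
      ring
    rw [h2] at h1; exact h1
  -- assembling
  have hsplit : (Q * Z).trace = (Q * X).trace + (Q * H).trace := by
    rw [hHdef, Matrix.mul_sub, Matrix.trace_sub]; ring
  have hPsplit : (P * H).trace = (P * Z).trace - (P * X).trace := by
    rw [hHdef, Matrix.mul_sub, Matrix.trace_sub]
  have hrsplit : r = (Q * H).trace - (P * H).trace := by
    rw [hrdef, Matrix.sub_mul, Matrix.trace_sub]
  -- Δ = tr(QZ) - s_jX - tr(PH) ≤ -δ m + r
  have hΔ : (∑ i : Fin n, if (i:ℕ) < j then ν i else 0)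
      - (∑ i : Fin n, if (i:ℕ) < j then μ i else 0) - (P * H).trace ≤ -δ * m + r := by
    have := hQX
    rw [← hQZ, hsplit] at *
    linarith [hQX]
  -- final : -δ m + r ≤ F / (2δ)
  have hfinal : -δ * m + r ≤ F / (2 * δ) := gap_arith δ m r F hδ hm0 hF0 hr2
  calc _ ≤ -δ * m + r := hΔ
    _ ≤ F / (2 * δ) := hfinal
end
section tele
variable {n : ℕ}

/-- extension of `w` by zero -/
def wext (n : ℕ) (w : Fin n → ℝ) : ℕ → ℝ := fun k => if h : k < n then w ⟨k, h⟩ else 0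
/-- difference coefficients -/
def dco (n : ℕ) (w : Fin n → ℝ) : ℕ → ℝ := fun k => wext n w k - wext n w (k+1)

lemma tele_sum (w : Fin n → ℝ) {j : ℕ} (hj : j ≤ n) :
    ∑ k ∈ Finset.Ico j n, dco n w k = wext n w j := by
  have h1 : ∀ m, ∑ k ∈ Finset.range m, dco n w k = wext n w 0 - wext n w m := by
    intro m
    exact Finset.sum_range_sub' (wext n w) m
  rw [Finset.sum_Ico_eq_sub _ hj, h1, h1]
  have : wext n w n = 0 := by rw [wext]; simp
  rw [this]; ring

lemma single_tele (w : Fin n → ℝ) (i : Fin n) :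
    w i = ∑ k ∈ Finset.range n, dco n w k * (if (i:ℕ) < k+1 then 1 else 0) := by
  have h1 : ∀ k, dco n w k * (if (i:ℕ) < k+1 then (1:ℝ) else 0)
      = if (i:ℕ) ≤ k then dco n w k else 0 := by
    intro k
    by_cases h : (i:ℕ) < k+1
    · rw [if_pos h, if_pos (by omega), mul_one]
    · rw [if_neg h, if_neg (by omega), mul_zero]
  rw [Finset.sum_congr rfl (fun k _ => h1 k), Finset.sum_ite, Finset.sum_const_zero, add_zero]
  have h2 : (Finset.range n).filter (fun k => (i:ℕ) ≤ k) = Finset.Ico (i:ℕ) n := by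
    ext x; simp [Finset.mem_filter, Finset.mem_range, Finset.mem_Ico, and_comm]
  rw [h2, tele_sum w (le_of_lt i.2)]
  rw [wext, dif_pos i.2]

lemma sum_w_mul (w v : Fin n → ℝ) :
    ∑ i, v i * w i
      = ∑ k ∈ Finset.range n, dco n w k * (∑ i : Fin n, if (i:ℕ) < k+1 then v i else 0) := by
  have : ∀ k, dco n w k * (∑ i : Fin n, if (i:ℕ) < k+1 then v i else 0)
      = ∑ i : Fin n, v i * (dco n w k * (if (i:ℕ) < k+1 then 1 else 0)) := by
    intro k
    rw [Finset.mul_sum]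
    apply Finset.sum_congr rfl
    intro i _
    by_cases h : (i:ℕ) < k+1 <;> simp [h, mul_comm]
  rw [Finset.sum_congr rfl (fun k _ => this k), Finset.sum_comm]
  apply Finset.sum_congr rfl
  intro i _
  rw [← Finset.mul_sum, ← single_tele]

lemma diag_tele (w : Fin n → ℝ) :
    Matrix.diagonal w = ∑ k ∈ Finset.range n, dco n w k • Ek n (k+1) := by
  ext i i'
  rw [Matrix.sum_apply]
  by_cases h : i = i'
  · subst h
    rw [Matrix.diagonal_apply_eq]
    have : ∀ k, (dco n w k • Ek n (k+1)) i i = dco n w k * (if (i:ℕ) < k+1 then 1 else 0) := by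
      intro k
      rw [Matrix.smul_apply, Ek, Matrix.diagonal_apply_eq, smul_eq_mul]
    rw [Finset.sum_congr rfl (fun k _ => this k), ← single_tele]
  · rw [Matrix.diagonal_apply_ne _ h]
    symm
    apply Finset.sum_eq_zero
    intro k _
    rw [Matrix.smul_apply, Ek, Matrix.diagonal_apply_ne _ h, smul_zero]

lemma trace_W_tele (w : Fin n → ℝ) (V₀ H : Mat n) :
    ((V₀ * Matrix.diagonal w * V₀ᵀ) * H).trace
      = ∑ k ∈ Finset.range n, dco n w k * ((V₀ * Ek n (k+1) * V₀ᵀ) * H).trace := by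
  have : V₀ * Matrix.diagonal w * V₀ᵀ * H
      = ∑ k ∈ Finset.range n, dco n w k • (V₀ * Ek n (k+1) * V₀ᵀ * H) := by
    rw [diag_tele, Finset.mul_sum, Finset.sum_mul, Finset.sum_mul]
    apply Finset.sum_congr rfl
    intro k _
    rw [Matrix.mul_smul, Matrix.smul_mul, Matrix.smul_mul]
  rw [this, Matrix.trace_sum]
  apply Finset.sum_congr rfl
  intro k _
  rw [Matrix.trace_smul, smul_eq_mul]
end tele
section
variable {n : ℕ}

/-- The second-order bound: there is a constant `K ≥ 0` (depending on `X, μ, w, V₀`) such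
that for all symmetric `Z` with eigendecomposition, the telescoped expression is bounded
by `K` times the squared Frobenius norm of `Z - X`. -/
lemma second_order (X V₀ : Mat n) (μ w : Fin n → ℝ)
    (hV₀1 : V₀ᵀ * V₀ = 1) (hV₀2 : V₀ * V₀ᵀ = 1)
    (hXd : X = V₀ * Matrix.diagonal μ * V₀ᵀ)
    (hμmono : ∀ i i' : Fin n, i ≤ i' → μ i' ≤ μ i)
    (hblock : ∀ (k : ℕ) (h : k + 1 < n), μ ⟨k, by omega⟩ = μ ⟨k+1, h⟩ →
      w ⟨k, by omega⟩ = w ⟨k+1, h⟩) :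
    ∃ K : ℝ, 0 ≤ K ∧ ∀ (Z U : Mat n) (ν : Fin n → ℝ), Uᵀ * U = 1 → U * Uᵀ = 1 →
      Z = U * Matrix.diagonal ν * Uᵀ → (∀ i i' : Fin n, i ≤ i' → ν i' ≤ ν i) →
      |(∑ i, (ν i - μ i) * w i) - ((V₀ * Matrix.diagonal w * V₀ᵀ) * (Z - X)).trace|
        ≤ K * ((Z - X) * (Z - X)ᵀ).trace := by
  classical
  -- the constant
  set C : ℕ → ℝ := fun k =>
    if h : k + 1 < n then
      (if μ ⟨k, by omega⟩ = μ ⟨k+1, h⟩ then 0 else 1 / (2 * (μ ⟨k, by omega⟩ - μ ⟨k+1, h⟩)))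
    else 0 with hC
  have hCnonneg : ∀ k, 0 ≤ C k := by
    intro k
    simp only [hC]
    by_cases h : k + 1 < n
    · rw [dif_pos h]
      by_cases he : μ ⟨k, by omega⟩ = μ ⟨k+1, h⟩
      · rw [if_pos he]
      · rw [if_neg he]
        have hlt : μ ⟨k+1, h⟩ ≤ μ ⟨k, by omega⟩ :=
          hμmono ⟨k, by omega⟩ ⟨k+1, h⟩ (by rw [Fin.le_def]; simp)
        have : 0 < μ ⟨k, by omega⟩ - μ ⟨k+1, h⟩ := by
          rcases lt_or_eq_of_le hlt with h' | h'
          · linarith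
          · exact absurd h'.symm he
        positivity
    · rw [dif_neg h]
  refine ⟨∑ k ∈ Finset.range n, |dco n w k| * C k, ?_, ?_⟩
  · exact Finset.sum_nonneg fun k _ => mul_nonneg (abs_nonneg _) (hCnonneg k)
  intro Z U ν hU1 hU2 hZd hνmono
  set F : ℝ := ((Z - X) * (Z - X)ᵀ).trace with hF
  have hF0 : 0 ≤ F := frob_nonneg _
  -- telescoping
  have hsplit : ∀ k : ℕ, (∑ i : Fin n, if (i:ℕ) < k then ν i - μ i else 0)
      = (∑ i : Fin n, if (i:ℕ) < k then ν i else 0)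
        - (∑ i : Fin n, if (i:ℕ) < k then μ i else 0) := by
    intro k
    rw [← Finset.sum_sub_distrib]
    apply Finset.sum_congr rfl
    intro i _
    by_cases h : (i:ℕ) < k <;> simp [h]
  have htele : (∑ i, (ν i - μ i) * w i) - ((V₀ * Matrix.diagonal w * V₀ᵀ) * (Z - X)).trace
      = ∑ k ∈ Finset.range n, dco n w k *
          ((∑ i : Fin n, if (i:ℕ) < k+1 then ν i else 0)
            - (∑ i : Fin n, if (i:ℕ) < k+1 then μ i else 0)
            - ((V₀ * Ek n (k+1) * V₀ᵀ) * (Z - X)).trace) := by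
    rw [sum_w_mul w (fun i => ν i - μ i), trace_W_tele, ← Finset.sum_sub_distrib]
    apply Finset.sum_congr rfl
    intro k _
    rw [hsplit (k+1)]
    ring
  rw [htele]
  calc |∑ k ∈ Finset.range n, dco n w k * _|
      ≤ ∑ k ∈ Finset.range n, |dco n w k *
          ((∑ i : Fin n, if (i:ℕ) < k+1 then ν i else 0)
            - (∑ i : Fin n, if (i:ℕ) < k+1 then μ i else 0)
            - ((V₀ * Ek n (k+1) * V₀ᵀ) * (Z - X)).trace)| := Finset.abs_sum_le_sum_abs _ _
    _ ≤ ∑ k ∈ Finset.range n, (|dco n w k| * C k) * F := by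
        apply Finset.sum_le_sum
        intro k hkmem
        rw [Finset.mem_range] at hkmem
        have hk1 : k + 1 ≤ n := hkmem
        set Δ : ℝ := (∑ i : Fin n, if (i:ℕ) < k+1 then ν i else 0)
            - (∑ i : Fin n, if (i:ℕ) < k+1 then μ i else 0)
            - ((V₀ * Ek n (k+1) * V₀ᵀ) * (Z - X)).trace with hΔdef
        have hΔ0 : 0 ≤ Δ := delta_lower hk1 X V₀ μ hV₀1 hXd Z U ν hU1 hZd hνmono
        rw [abs_mul, abs_of_nonneg hΔ0]
        rcases Nat.lt_or_ge (k+1) n with hlt | hge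
        · -- k+1 < n
          by_cases he : μ ⟨k, by omega⟩ = μ ⟨k+1, hlt⟩
          · -- no gap, but then dco = 0
            have hd0 : dco n w k = 0 := by
              show wext n w k - wext n w (k+1) = 0
              have e1 : wext n w k = w ⟨k, by omega⟩ := dif_pos (by omega : k < n)
              have e2 : wext n w (k+1) = w ⟨k+1, hlt⟩ := dif_pos hlt
              rw [e1, e2, hblock k hlt he]
              ring
            rw [hd0]
            simp only [abs_zero, zero_mul]
            exact le_refl 0

          · -- gap
            have hlt' : μ ⟨k+1, hlt⟩ ≤ μ ⟨k, by omega⟩ :=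
              hμmono ⟨k, by omega⟩ ⟨k+1, hlt⟩ (by rw [Fin.le_def]; simp)
            have hδpos : 0 < μ ⟨k, by omega⟩ - μ ⟨k+1, hlt⟩ := by
              rcases lt_or_eq_of_le hlt' with h' | h'
              · linarith
              · exact absurd h'.symm he
            have hΔup : Δ ≤ F / (2 * (μ ⟨k, by omega⟩ - μ ⟨k+1, hlt⟩)) :=
              delta_upper hlt X V₀ μ hV₀1 hXd hμmono Z U ν hU1 hU2 hZd hδpos rfl
            have hCk : C k = 1 / (2 * (μ ⟨k, by omega⟩ - μ ⟨k+1, hlt⟩)) := by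
              simp only [hC]
              rw [dif_pos hlt, if_neg he]
            rw [hCk]
            calc |dco n w k| * Δ
                ≤ |dco n w k| * (F / (2 * (μ ⟨k, by omega⟩ - μ ⟨k+1, hlt⟩))) :=
                  mul_le_mul_of_nonneg_left hΔup (abs_nonneg _)
              _ = |dco n w k| * (1 / (2 * (μ ⟨k, by omega⟩ - μ ⟨k+1, hlt⟩))) * F := by
                  field_simp
        · -- k+1 = n
          have : k + 1 = n := le_antisymm hk1 hge
          have hΔeq : Δ = 0 := by
            rw [hΔdef]
            rw [this]
            exact delta_top X V₀ μ hV₀2 hXd hV₀1 Z U ν hU1 hU2 hZd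
          rw [hΔeq, mul_zero]
          exact mul_nonneg (mul_nonneg (abs_nonneg _) (hCnonneg k)) hF0
    _ = (∑ k ∈ Finset.range n, |dco n w k| * C k) * F := by rw [Finset.sum_mul]
end
section
variable {n : ℕ}

lemma sdiff_sq {j : ℕ} (hj : j ≤ n) (X V₀ : Mat n) (μ : Fin n → ℝ)
    (hV₀1 : V₀ᵀ * V₀ = 1) (hXd : X = V₀ * Matrix.diagonal μ * V₀ᵀ)
    (hμmono : ∀ i i' : Fin n, i ≤ i' → μ i' ≤ μ i)
    (Z U : Mat n) (ν : Fin n → ℝ) (hU1 : Uᵀ * U = 1)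
    (hZd : Z = U * Matrix.diagonal ν * Uᵀ)
    (hνmono : ∀ i i' : Fin n, i ≤ i' → ν i' ≤ ν i) :
    ((∑ i : Fin n, if (i:ℕ) < j then ν i else 0)
      - (∑ i : Fin n, if (i:ℕ) < j then μ i else 0))^2
      ≤ (n:ℝ) * ((Z - X) * (Z - X)ᵀ).trace := by
  set P : Mat n := V₀ * Ek n j * V₀ᵀ
  set Q : Mat n := U * Ek n j * Uᵀ
  set H : Mat n := Z - X with hH
  set F : ℝ := (H * Hᵀ).trace with hFdef
  have hF0 : 0 ≤ F := frob_nonneg H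
  set D : ℝ := (∑ i : Fin n, if (i:ℕ) < j then ν i else 0)
      - (∑ i : Fin n, if (i:ℕ) < j then μ i else 0) with hD
  have hPQfrob : ∀ R : Mat n, R.IsSymm → R * R = R → R.trace = (j:ℝ) →
      ((R * H).trace)^2 ≤ (n:ℝ) * F := by
    intro R hRs hRi hRt
    have h1 : ((R * H).trace)^2 ≤ (R * Rᵀ).trace * F := trace_sq_le R H
    have h2 : (R * Rᵀ).trace = (j:ℝ) := by rw [hRs.eq, hRi, hRt]
    have h3 : (j:ℝ) ≤ (n:ℝ) := by exact_mod_cast hj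
    nlinarith
  have hQbound := hPQfrob Q (projV_symm U j) (projV_idem U hU1 j) (projV_trace U hU1 hj)
  have hPbound := hPQfrob P (projV_symm V₀ j) (projV_idem V₀ hV₀1 j) (projV_trace V₀ hV₀1 hj)
  -- upper: D ≤ tr(QH)
  have hupper : D ≤ (Q * H).trace := by
    have e1 : (Q * Z).trace = ∑ i : Fin n, if (i:ℕ) < j then ν i else 0 :=
      trace_projk_self U Z ν hU1 hZd
    have e2 : (Q * X).trace ≤ ∑ i : Fin n, if (i:ℕ) < j then μ i else 0 :=
      fan_plain hj X V₀ μ hV₀1 hXd hμmono Q (projV_symm U j) (projV_idem U hU1 j)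
        (projV_trace U hU1 hj)
    have e3 : (Q * H).trace = (Q * Z).trace - (Q * X).trace := by
      rw [hH, Matrix.mul_sub, Matrix.trace_sub]
    rw [hD, e3, e1]
    linarith
  -- lower: tr(PH) ≤ D
  have hlower : (P * H).trace ≤ D := by
    have e1 : (P * X).trace = ∑ i : Fin n, if (i:ℕ) < j then μ i else 0 :=
      trace_projk_self V₀ X μ hV₀1 hXd
    have e2 : (P * Z).trace ≤ ∑ i : Fin n, if (i:ℕ) < j then ν i else 0 :=
      fan_plain hj Z U ν hU1 hZd hνmono P (projV_symm V₀ j) (projV_idem V₀ hV₀1 j)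
        (projV_trace V₀ hV₀1 hj)
    have e3 : (P * H).trace = (P * Z).trace - (P * X).trace := by
      rw [hH, Matrix.mul_sub, Matrix.trace_sub]
    rw [hD, e3, e1]
    linarith
  rcases le_or_gt 0 D with hD0 | hD0
  · nlinarith
  · nlinarith

lemma eig_coord_sq (X V₀ : Mat n) (μ : Fin n → ℝ)
    (hV₀1 : V₀ᵀ * V₀ = 1) (hXd : X = V₀ * Matrix.diagonal μ * V₀ᵀ)
    (hμmono : ∀ i i' : Fin n, i ≤ i' → μ i' ≤ μ i)
    (Z U : Mat n) (ν : Fin n → ℝ) (hU1 : Uᵀ * U = 1)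
    (hZd : Z = U * Matrix.diagonal ν * Uᵀ)
    (hνmono : ∀ i i' : Fin n, i ≤ i' → ν i' ≤ ν i) (i : Fin n) :
    (ν i - μ i)^2 ≤ 4 * ((n:ℝ) * ((Z - X) * (Z - X)ᵀ).trace) := by
  have hsingle : ∀ v : Fin n → ℝ,
      (∑ l : Fin n, if (l:ℕ) < (i:ℕ)+1 then v l else 0)
        - (∑ l : Fin n, if (l:ℕ) < (i:ℕ) then v l else 0) = v i := by
    intro v
    rw [← Finset.sum_sub_distrib]
    have : ∀ l : Fin n, (if (l:ℕ) < (i:ℕ)+1 then v l else 0)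
        - (if (l:ℕ) < (i:ℕ) then v l else 0) = if l = i then v l else 0 := by
      intro l
      by_cases h1 : (l:ℕ) < (i:ℕ)
      · rw [if_pos (by omega), if_pos h1, if_neg (by intro he; subst he; omega)]; ring
      · by_cases h2 : (l:ℕ) < (i:ℕ)+1
        · have : l = i := Fin.ext (by omega)
          subst this
          rw [if_pos h2, if_neg h1, if_pos rfl]; ring
        · rw [if_neg h2, if_neg h1, if_neg (by intro he; subst he; omega)]; ring
    rw [Finset.sum_congr rfl (fun l _ => this l), Finset.sum_ite_eq' Finset.univ i v]
    simp
  have h1 := sdiff_sq (j := (i:ℕ)+1) (by omega) X V₀ μ hV₀1 hXd hμmono Z U ν hU1 hZd hνmono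
  have h2 := sdiff_sq (j := (i:ℕ)) (by omega) X V₀ μ hV₀1 hXd hμmono Z U ν hU1 hZd hνmono
  have e : ν i - μ i = ((∑ l : Fin n, if (l:ℕ) < (i:ℕ)+1 then ν l else 0)
      - (∑ l : Fin n, if (l:ℕ) < (i:ℕ)+1 then μ l else 0))
      - ((∑ l : Fin n, if (l:ℕ) < (i:ℕ) then ν l else 0)
      - (∑ l : Fin n, if (l:ℕ) < (i:ℕ) then μ l else 0)) := by
    rw [show ((∑ l : Fin n, if (l:ℕ) < (i:ℕ)+1 then ν l else 0)
      - (∑ l : Fin n, if (l:ℕ) < (i:ℕ)+1 then μ l else 0))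
      - ((∑ l : Fin n, if (l:ℕ) < (i:ℕ) then ν l else 0)
      - (∑ l : Fin n, if (l:ℕ) < (i:ℕ) then μ l else 0))
      = ((∑ l : Fin n, if (l:ℕ) < (i:ℕ)+1 then ν l else 0)
      - (∑ l : Fin n, if (l:ℕ) < (i:ℕ) then ν l else 0))
      - ((∑ l : Fin n, if (l:ℕ) < (i:ℕ)+1 then μ l else 0)
      - (∑ l : Fin n, if (l:ℕ) < (i:ℕ) then μ l else 0)) from by ring,
      hsingle ν, hsingle μ]
  rw [e]
  set D1 : ℝ := (∑ l : Fin n, if (l:ℕ) < (i:ℕ)+1 then ν l else 0)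
      - (∑ l : Fin n, if (l:ℕ) < (i:ℕ)+1 then μ l else 0)
  set D2 : ℝ := (∑ l : Fin n, if (l:ℕ) < (i:ℕ) then ν l else 0)
      - (∑ l : Fin n, if (l:ℕ) < (i:ℕ) then μ l else 0)
  nlinarith [sq_nonneg (D1 + D2)]
end
section
variable {n : ℕ}

/-- permutation as a continuous linear map on `Fin n → ℝ` -/
noncomputable def permCLM (π : Equiv.Perm (Fin n)) : (Fin n → ℝ) →L[ℝ] (Fin n → ℝ) :=
  LinearMap.toContinuousLinearMap
    { toFun := fun x => x ∘ π
      map_add' := fun x y => rfl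
      map_smul' := fun c x => rfl }

@[simp] lemma permCLM_apply (π : Equiv.Perm (Fin n)) (x : Fin n → ℝ) :
    permCLM π x = x ∘ π := by
  rw [permCLM]
  simp

/-- the gradient of a symmetric function at a point with equal coordinates `i`,`j`
has equal `i`,`j` coordinates. -/
lemma grad_symm (f : (Fin n → ℝ) → ℝ)
    (hsymm : ∀ (π : Equiv.Perm (Fin n)) (x : Fin n → ℝ), f (x ∘ π) = f x)
    (μ : Fin n → ℝ) (hf : DifferentiableAt ℝ f μ) (i j : Fin n) (hij : μ i = μ j) :
    fderiv ℝ f μ (Pi.single i 1) = fderiv ℝ f μ (Pi.single j 1) := by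
  set π := Equiv.swap i j with hπ
  have hμπ : μ ∘ π = μ := by
    funext k
    simp only [Function.comp_apply, hπ]
    rcases eq_or_ne k i with rfl | h1
    · rw [Equiv.swap_apply_left]; exact hij.symm
    · rcases eq_or_ne k j with rfl | h2
      · rw [Equiv.swap_apply_right]; exact hij
      · rw [Equiv.swap_apply_of_ne_of_ne h1 h2]
  have hLμ : permCLM π μ = μ := by rw [permCLM_apply]; exact hμπ
  have hcomp : f ∘ (permCLM π) = f := by
    funext x
    simp only [Function.comp_apply, permCLM_apply]
    exact hsymm π x
  have hchain : HasFDerivAt (f ∘ permCLM π) ((fderiv ℝ f μ).comp (permCLM π)) μ := by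
    have h1 : HasFDerivAt (permCLM π) (permCLM π) μ := (permCLM π).hasFDerivAt
    have h2 : HasFDerivAt f (fderiv ℝ f μ) (permCLM π μ) := by
      rw [hLμ]; exact hf.hasFDerivAt
    exact h2.comp μ h1
  rw [hcomp] at hchain
  have huniq : fderiv ℝ f μ = (fderiv ℝ f μ).comp (permCLM π) :=
    hf.hasFDerivAt.unique hchain
  have happ : Pi.single i 1 ∘ π = (Pi.single j 1 : Fin n → ℝ) := by
    funext k
    rw [Function.comp_apply]
    by_cases h1 : k = i
    · rw [h1, hπ, Equiv.swap_apply_left, Pi.single_apply, Pi.single_apply]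
      rcases eq_or_ne j i with h2 | h2
      · simp [h2]
      · simp [h2, h2.symm]
    · by_cases h2 : k = j
      · rw [h2, hπ, Equiv.swap_apply_right, Pi.single_apply, Pi.single_apply]
        simp
      · rw [hπ, Equiv.swap_apply_of_ne_of_ne h1 h2, Pi.single_apply, Pi.single_apply]
        simp [h1, h2]
  calc fderiv ℝ f μ (Pi.single i 1)
      = ((fderiv ℝ f μ).comp (permCLM π)) (Pi.single i 1) := by rw [← huniq]
    _ = fderiv ℝ f μ (Pi.single i 1 ∘ π) := by
        rw [ContinuousLinearMap.comp_apply, permCLM_apply]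
    _ = fderiv ℝ f μ (Pi.single j 1) := by rw [happ]

/-- `Df v = ∑ i, v i * w i` -/
lemma fderiv_apply_sum (f : (Fin n → ℝ) → ℝ) (μ : Fin n → ℝ) (v : Fin n → ℝ) :
    fderiv ℝ f μ v = ∑ i, v i * fderiv ℝ f μ (Pi.single i 1) := by
  have hv : v = ∑ i, v i • (Pi.single i 1 : Fin n → ℝ) := by
    funext k
    rw [Finset.sum_apply]
    have : ∀ i : Fin n, (v i • (Pi.single i 1 : Fin n → ℝ)) k
        = if k = i then v i else 0 := by
      intro i
      rw [Pi.smul_apply, Pi.single_apply]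
      by_cases h : k = i <;> simp [h]
    rw [Finset.sum_congr rfl (fun i _ => this i), Finset.sum_ite_eq Finset.univ k (fun i => v i)]
    simp
  conv_lhs => rw [hv]
  rw [map_sum]
  apply Finset.sum_congr rfl
  intro i _
  rw [ContinuousLinearMap.map_smul, smul_eq_mul]

/-- independence of the matrix `V (diag w) Vᵀ` from the diagonalizing `V`. -/
lemma W_unique (V₀ V : Mat n) (μ w : Fin n → ℝ)
    (hV₀1 : V₀ᵀ * V₀ = 1) (hV₀2 : V₀ * V₀ᵀ = 1)
    (hV1 : Vᵀ * V = 1) (hV2 : V * Vᵀ = 1)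
    (hXd : V₀ * Matrix.diagonal μ * V₀ᵀ = V * Matrix.diagonal μ * Vᵀ)
    (hw : ∀ i j : Fin n, μ i = μ j → w i = w j) :
    V * Matrix.diagonal w * Vᵀ = V₀ * Matrix.diagonal w * V₀ᵀ := by
  set U : Mat n := V₀ᵀ * V with hU
  have hUo1 : Uᵀ * U = 1 := by
    rw [hU, Matrix.transpose_mul, Matrix.transpose_transpose]
    calc Vᵀ * V₀ * (V₀ᵀ * V) = Vᵀ * (V₀ * V₀ᵀ) * V := by simp only [Matrix.mul_assoc]
      _ = 1 := by rw [hV₀2, Matrix.mul_one, hV1]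
  have hUo2 : U * Uᵀ = 1 := by
    rw [hU, Matrix.transpose_mul, Matrix.transpose_transpose]
    calc V₀ᵀ * V * (Vᵀ * V₀) = V₀ᵀ * (V * Vᵀ) * V₀ := by simp only [Matrix.mul_assoc]
      _ = 1 := by rw [hV2, Matrix.mul_one, hV₀1]
  have hcomm : Matrix.diagonal μ * U = U * Matrix.diagonal μ := by
    calc Matrix.diagonal μ * U = (V₀ᵀ * V₀) * Matrix.diagonal μ * (V₀ᵀ * V) := by
          rw [hV₀1, Matrix.one_mul, hU]
      _ = V₀ᵀ * (V₀ * Matrix.diagonal μ * V₀ᵀ) * V := by simp only [Matrix.mul_assoc]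
      _ = V₀ᵀ * (V * Matrix.diagonal μ * Vᵀ) * V := by rw [hXd]
      _ = (V₀ᵀ * V) * Matrix.diagonal μ * (Vᵀ * V) := by simp only [Matrix.mul_assoc]
      _ = U * Matrix.diagonal μ := by rw [hV1, Matrix.mul_one, hU]
  have hcommw : Matrix.diagonal w * U = U * Matrix.diagonal w := by
    ext i j
    rw [Matrix.diagonal_mul, Matrix.mul_diagonal]
    by_cases h : U i j = 0
    · rw [h, mul_zero, zero_mul]
    · have hc := congrFun (congrFun hcomm i) j
      rw [Matrix.diagonal_mul, Matrix.mul_diagonal] at hc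
      have h2 : (μ i - μ j) * U i j = 0 := by nlinarith [hc]
      have hμ : μ i = μ j := by
        rcases mul_eq_zero.1 h2 with h' | h'
        · linarith [h']
        · exact absurd h' h
      rw [hw i j hμ, mul_comm]
  have hVeq : V = V₀ * U := by
    rw [hU, ← Matrix.mul_assoc, hV₀2, Matrix.one_mul]
  rw [hVeq, Matrix.transpose_mul]
  calc V₀ * U * Matrix.diagonal w * (Uᵀ * V₀ᵀ)
      = V₀ * (U * Matrix.diagonal w * Uᵀ) * V₀ᵀ := by simp only [Matrix.mul_assoc]
    _ = V₀ * (Matrix.diagonal w * (U * Uᵀ)) * V₀ᵀ := by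
        rw [← hcommw]; simp only [Matrix.mul_assoc]
    _ = V₀ * Matrix.diagonal w * V₀ᵀ := by rw [hUo2, Matrix.mul_one, Matrix.mul_assoc]
end

lemma frob_le_norm {n : ℕ} (M : Mat n) : (M * Mᵀ).trace ≤ (n:ℝ)^2 * ‖M‖^2 := by
  have h1 : (M * Mᵀ).trace = ∑ i, ∑ j, (M i j)^2 := by
    simp [Matrix.trace, Matrix.diag, Matrix.mul_apply, Matrix.transpose_apply, sq]
  rw [h1]
  have h2 : ∀ i j : Fin n, (M i j)^2 ≤ ‖M‖^2 := by
    intro i j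
    have := Matrix.norm_entry_le_entrywise_sup_norm M (i := i) (j := j)
    have h0 : (0:ℝ) ≤ ‖M‖ := norm_nonneg _
    rw [Real.norm_eq_abs] at this
    nlinarith [abs_nonneg (M i j), sq_abs (M i j)]
  calc ∑ i, ∑ j, (M i j)^2 ≤ ∑ i : Fin n, ∑ j : Fin n, ‖M‖^2 :=
        Finset.sum_le_sum fun i _ => Finset.sum_le_sum fun j _ => h2 i j
    _ = (n:ℝ)^2 * ‖M‖^2 := by
        simp [Finset.sum_const]
        ring


lemma lip_arith (d N x T : ℝ) (h1 : d^2 ≤ 4*(N*T)) (h2 : T ≤ N^2*x^2) (hN : 1 ≤ N)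
    (hx : 0 ≤ x) : |d| ≤ 2*N^2*x := by
  have hN0 : (0:ℝ) ≤ N := by linarith
  have hb : (0:ℝ) ≤ 2*N^2*x := by positivity
  have key : (0:ℝ) ≤ (N-1) * (N^3*x^2) := mul_nonneg (by linarith) (by positivity)
  have h3 : d^2 ≤ (2*N^2*x)^2 := by
    nlinarith [mul_le_mul_of_nonneg_left h2 (by positivity : (0:ℝ) ≤ 4*N)]
  rw [abs_le]
  constructor <;> nlinarith [hb, h3]

lemma t2_arith (t B x c : ℝ) (hB : 0 ≤ B) (hx : 0 ≤ x) (ht : t ≤ B*(x*x))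
    (hx' : x*(B+1) ≤ c) : t ≤ c*x := by
  nlinarith [mul_le_mul_of_nonneg_left hx' hx]

end SpectralAux

/-- Gradient formula for spectral functions: if the symmetric function `f` is
differentiable at `λ(X)`, then `f ∘ λ` is Fréchet differentiable at `X ∈ S^n` and for
every orthogonal `V` with `X = V (Diag λ(X)) Vᵀ` and every symmetric `H`,
`∇(f∘λ)(X)[H] = tr((V (Diag ∇f(λ(X))) Vᵀ) H)`. -/
theorem statement2 {n : ℕ} (eig : Mat n → (Fin n → ℝ)) (heig : IsEigsOf eig)
    (X : Mat n) (hX : X.IsSymm)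
    (f : (Fin n → ℝ) → ℝ)
    (hsymm : ∀ (π : Equiv.Perm (Fin n)) (x : Fin n → ℝ), f (x ∘ π) = f x)
    (hf : DifferentiableAt ℝ f (eig X)) :
    DifferentiableAt ℝ (fun Z : symSub n => f (eig Z.1)) ⟨X, hX⟩ ∧
    ∀ V : Mat n, Vᵀ * V = 1 → V * Vᵀ = 1 → X = V * Matrix.diagonal (eig X) * Vᵀ →
      ∀ H : symSub n,
        fderiv ℝ (fun Z : symSub n => f (eig Z.1)) ⟨X, hX⟩ H =
          Matrix.trace
            ((V * Matrix.diagonal (fun i => fderiv ℝ f (eig X) (Pi.single i 1)) * Vᵀ) *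
              H.1) := by
  classical
  obtain ⟨hmono, V₀, hV₀1, hV₀2, hXdec⟩ := heig X hX
  set μ : Fin n → ℝ := eig X with hμdef
  set w : Fin n → ℝ := fun i => fderiv ℝ f μ (Pi.single i 1) with hwdef
  have hww : ∀ i j : Fin n, μ i = μ j → w i = w j := fun i j hij =>
    grad_symm f hsymm μ hf i j hij
  set Wmat : Mat n := V₀ * Matrix.diagonal w * V₀ᵀ with hWmatdef
  set X₀ : symSub n := ⟨X, hX⟩ with hX₀def
  set L : symSub n →L[ℝ] ℝ := LinearMap.toContinuousLinearMap
    { toFun := fun Z : symSub n => ((Wmat * Z.1).trace)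
      map_add' := fun A B => by
        simp only [Submodule.coe_add, Matrix.mul_add, Matrix.trace_add]
      map_smul' := fun c A => by
        simp only [SetLike.val_smul, Matrix.mul_smul, Matrix.trace_smul, smul_eq_mul,
          RingHom.id_apply] } with hLdef
  have hLapp : ∀ Z : symSub n, L Z = (Wmat * Z.1).trace := fun Z => rfl
  -- block constancy of the gradient
  have hblock : ∀ (k : ℕ) (h : k + 1 < n), μ ⟨k, by omega⟩ = μ ⟨k+1, h⟩ →
      w ⟨k, by omega⟩ = w ⟨k+1, h⟩ := fun k h he => hww _ _ he
  obtain ⟨K, hK0, hKbound⟩ := second_order X V₀ μ w hV₀1 hV₀2 hXdec hmono hblock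
  -- facts for each symmetric Z
  have hZfacts : ∀ Z : symSub n,
      |(∑ i, (eig Z.1 i - μ i) * w i) - (Wmat * (Z.1 - X)).trace|
        ≤ K * ((Z.1 - X) * (Z.1 - X)ᵀ).trace
      ∧ ∀ i : Fin n, (eig Z.1 i - μ i)^2 ≤ 4 * ((n:ℝ) * ((Z.1 - X) * (Z.1 - X)ᵀ).trace) := by
    intro Z
    obtain ⟨hνmono, U, hU1, hU2, hZdec⟩ := heig Z.1 Z.2
    exact ⟨hKbound Z.1 U (eig Z.1) hU1 hU2 hZdec hνmono,
      fun i => eig_coord_sq X V₀ μ hV₀1 hXdec hmono Z.1 U (eig Z.1) hU1 hZdec hνmono i⟩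
  have hnorm : ∀ Z : symSub n, ‖Z - X₀‖ = ‖Z.1 - X‖ := fun Z => rfl
  have hFle : ∀ Z : symSub n, ((Z.1 - X) * (Z.1 - X)ᵀ).trace ≤ (n:ℝ)^2 * ‖Z - X₀‖^2 := by
    intro Z
    rw [hnorm]
    exact frob_le_norm _
  -- Lipschitz-type bound for eigenvalues (in sup norms)
  have hlip : ∀ Z : symSub n,
      ‖(fun i => eig Z.1 i - μ i : Fin n → ℝ)‖ ≤ (2*(n:ℝ)^2) * ‖Z - X₀‖ := by
    intro Z
    have hb : (0:ℝ) ≤ 2*(n:ℝ)^2 * ‖Z - X₀‖ := by positivity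
    rw [pi_norm_le_iff_of_nonneg hb]
    intro i
    have h1 := (hZfacts Z).2 i
    have h2 := hFle Z
    have hn1 : (1:ℝ) ≤ (n:ℝ) := by
      have : 0 < n := i.pos
      exact_mod_cast this
    have hx0 : (0:ℝ) ≤ ‖Z - X₀‖ := norm_nonneg _
    rw [Real.norm_eq_abs]
    exact lip_arith _ _ _ _ h1 h2 hn1 hx0
  -- big-O of eigenvalue map
  have hφO : (fun Z : symSub n => (fun i => eig Z.1 i - μ i : Fin n → ℝ))
      =O[nhds X₀] (fun Z : symSub n => Z - X₀) := by
    apply Asymptotics.isBigO_of_le' (c := 2*(n:ℝ)^2)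
    intro Z
    exact hlip Z
  -- tendsto
  have h0tend : Filter.Tendsto (fun Z : symSub n => Z - X₀) (nhds X₀) (nhds 0) := by
    have h := (continuous_id.sub (continuous_const (y := X₀))).tendsto X₀
    exact tendsto_sub_nhds_zero_iff.mpr Filter.tendsto_id
  have h1tend : Filter.Tendsto (fun Z : symSub n => (fun i => eig Z.1 i - μ i : Fin n → ℝ))
      (nhds X₀) (nhds 0) := hφO.trans_tendsto h0tend
  have htend : Filter.Tendsto (fun Z : symSub n => eig Z.1) (nhds X₀) (nhds μ) := by
    rw [← tendsto_sub_nhds_zero_iff]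
    exact h1tend
  -- first-order term is little-o
  have hDfo := hf.hasFDerivAt.isLittleO
  have hcomp := hDfo.comp_tendsto htend
  have t1o : (fun Z : symSub n => f (eig Z.1) - f μ - ∑ i, (eig Z.1 i - μ i) * w i)
      =o[nhds X₀] (fun Z : symSub n => Z - X₀) := by
    have step : (fun Z : symSub n =>
        f (eig Z.1) - f μ - (fderiv ℝ f μ) (eig Z.1 - μ))
        =o[nhds X₀] (fun Z : symSub n => Z - X₀) := hcomp.trans_isBigO hφO
    apply step.congr' ?_ Filter.EventuallyEq.rfl
    apply Filter.Eventually.of_forall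
    intro Z
    have : (fderiv ℝ f μ) (eig Z.1 - μ) = ∑ i, (eig Z.1 i - μ i) * w i := by
      rw [fderiv_apply_sum f μ (eig Z.1 - μ)]
      apply Finset.sum_congr rfl
      intro i _
      rfl
    exact congrArg (fun t => f (eig Z.1) - f μ - t) this
  -- second-order term is little-o
  have ht2bound : ∀ Z : symSub n,
      |(∑ i, (eig Z.1 i - μ i) * w i) - (Wmat * (Z.1 - X)).trace|
        ≤ (K * (n:ℝ)^2) * (‖Z - X₀‖ * ‖Z - X₀‖) := by
    intro Z
    have h1 := (hZfacts Z).1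
    have h2 := hFle Z
    have h3 : K * ((Z.1 - X) * (Z.1 - X)ᵀ).trace ≤ K * ((n:ℝ)^2 * ‖Z - X₀‖^2) :=
      mul_le_mul_of_nonneg_left h2 hK0
    calc |(∑ i, (eig Z.1 i - μ i) * w i) - (Wmat * (Z.1 - X)).trace|
        ≤ K * ((Z.1 - X) * (Z.1 - X)ᵀ).trace := h1
      _ ≤ K * ((n:ℝ)^2 * ‖Z - X₀‖^2) := h3
      _ = (K * (n:ℝ)^2) * (‖Z - X₀‖ * ‖Z - X₀‖) := by ring
  have t2o : (fun Z : symSub n =>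
      (∑ i, (eig Z.1 i - μ i) * w i) - (Wmat * (Z.1 - X)).trace)
      =o[nhds X₀] (fun Z : symSub n => Z - X₀) := by
    rw [Asymptotics.isLittleO_iff]
    intro c hc
    set B : ℝ := K * (n:ℝ)^2 with hBdef
    have hB0 : 0 ≤ B := by positivity
    have hε : 0 < c / (B + 1) := by positivity
    have hev : ∀ᶠ Z : symSub n in nhds X₀, dist Z X₀ < c / (B + 1) :=
      Filter.eventually_of_mem (Metric.ball_mem_nhds X₀ hε) (fun Z hZ => Metric.mem_ball.1 hZ)
    filter_upwards [hev] with Z hZ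
    have hx0 : (0:ℝ) ≤ ‖Z - X₀‖ := norm_nonneg _
    have hd : ‖Z - X₀‖ = dist Z X₀ := by rw [dist_eq_norm]
    have hx' : ‖Z - X₀‖ * (B + 1) ≤ c := by
      rw [hd]
      have := (lt_div_iff₀ (by linarith : (0:ℝ) < B + 1)).1 hZ
      linarith
    have hb := ht2bound Z
    rw [Real.norm_eq_abs]
    calc |(∑ i, (eig Z.1 i - μ i) * w i) - (Wmat * (Z.1 - X)).trace|
        ≤ B * (‖Z - X₀‖ * ‖Z - X₀‖) := hb
      _ ≤ c * ‖Z - X₀‖ := t2_arith _ _ _ _ hB0 hx0 (le_refl _) hx' |>.trans (le_refl _)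
  -- assemble HasFDerivAt
  have key : HasFDerivAt (fun Z : symSub n => f (eig Z.1)) L X₀ := by
    apply HasFDerivAt.of_isLittleO
    have hsum := t1o.add t2o
    apply hsum.congr' ?_ Filter.EventuallyEq.rfl
    apply Filter.Eventually.of_forall
    intro Z
    have hcoe : ((Z - X₀ : symSub n) : Mat n) = Z.1 - X := rfl
    have hLZ : L (Z - X₀) = (Wmat * (Z.1 - X)).trace := by
      rw [hLapp (Z - X₀), hcoe]
    show (f (eig Z.1) - f μ - ∑ i, (eig Z.1 i - μ i) * w i)
        + ((∑ i, (eig Z.1 i - μ i) * w i) - (Wmat * (Z.1 - X)).trace)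
        = f (eig Z.1) - f (eig X₀.1) - L (Z - X₀)
    rw [hLZ]
    show _ = f (eig Z.1) - f μ - (Wmat * (Z.1 - X)).trace
    ring
  constructor
  · exact key.differentiableAt
  · intro V hV1 hV2 hXdec' H
    rw [key.fderiv, hLapp H]
    have hWeq : V * Matrix.diagonal w * Vᵀ = Wmat := by
      rw [hWmatdef]
      exact W_unique V₀ V μ w hV₀1 hV₀2 hV1 hV2 (by rw [← hXdec, ← hXdec']) hww
    rw [← hWeq]
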